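/- For all real φ with 0 < φ < π/2 and all real ℓ > 0, if c is defined by sinh c = coth(ℓ/4) · cot φ, w by sinh w = cos φ / sinh(ℓ/2), and v by cosh v = 1 / sin φ, then c > w + v. -/
import Mathlib


open Real

/-- Inverse hyperbolic cosine on `[1, ∞)`. -/
noncomputable def arccosh (x : ℝ) : ℝ := Real.log (x + Real.sqrt (x ^ 2 - 1))

set_option maxHeartbeats 1000000 in
/-- The distance `c` between a cone point of angle `2φ` and a geodesic of
length `ℓ` exceeds the sum of the collar widths `w + v`. -/
theorem collar_key_inequality (φ ℓ c w v : ℝ)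
    (hφ0 : 0 < φ) (hφ : φ < π / 2) (hℓ : 0 < ℓ)
    (hc0 : 0 ≤ c) (hw0 : 0 ≤ w) (hv0 : 0 ≤ v)
    (hc : Real.sinh c = (Real.cosh (ℓ / 4) / Real.sinh (ℓ / 4)) * (Real.cos φ / Real.sin φ))
    (hw : Real.sinh w = Real.cos φ / Real.sinh (ℓ / 2))
    (hv : Real.cosh v = 1 / Real.sin φ) :
    c > w + v := by
  have hs : 0 < Real.sin φ := Real.sin_pos_of_pos_of_lt_pi hφ0 (by linarith [Real.pi_pos])
  have hco : 0 < Real.cos φ := Real.cos_pos_of_mem_Ioo ⟨by linarith [Real.pi_pos], hφ⟩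
  have hpyth := Real.sin_sq_add_cos_sq φ
  have hs1 : Real.sin φ < 1 := by nlinarith
  have hco1 : Real.cos φ < 1 := by nlinarith
  have hco2 : Real.cos φ ^ 2 < 1 := by nlinarith
  have hSt : 0 < Real.sinh (ℓ / 4) := Real.sinh_pos_iff.2 (by linarith)
  have hCt : 0 < Real.cosh (ℓ / 4) := Real.cosh_pos _
  have hS : Real.sinh (ℓ / 2) = 2 * Real.sinh (ℓ / 4) * Real.cosh (ℓ / 4) := by
    rw [show ℓ / 2 = 2 * (ℓ / 4) by ring, Real.sinh_two_mul]
  have hC : Real.cosh (ℓ / 2) = 2 * Real.cosh (ℓ / 4) ^ 2 - 1 := by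
    rw [show ℓ / 2 = 2 * (ℓ / 4) by ring, Real.cosh_two_mul]
    have := Real.cosh_sq (ℓ / 4); linarith
  have hSpos : 0 < Real.sinh (ℓ / 2) := Real.sinh_pos_iff.2 (by linarith)
  have hCpos : 0 < Real.cosh (ℓ / 2) := Real.cosh_pos _
  -- sinh v = cos φ / sin φ
  have hvsq := Real.cosh_sq v
  have hsvnn : 0 ≤ Real.sinh v := Real.sinh_nonneg_iff.2 hv0
  have hsv : Real.sinh v = Real.cos φ / Real.sin φ := by
    have h1 : Real.sinh v ^ 2 = (Real.cos φ / Real.sin φ) ^ 2 := by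
      rw [hv] at hvsq
      field_simp at hvsq ⊢
      nlinarith
    have h2 : (Real.sinh v - Real.cos φ / Real.sin φ) *
        (Real.sinh v + Real.cos φ / Real.sin φ) = 0 := by nlinarith
    rcases mul_eq_zero.1 h2 with h | h
    · linarith
    · exfalso
      have : 0 < Real.cos φ / Real.sin φ := div_pos hco hs
      linarith
  -- cosh w < cosh(ℓ/2)/sinh(ℓ/2)
  have hwsq := Real.cosh_sq w
  have hCsq := Real.cosh_sq (ℓ / 2)
  have h4 : Real.cosh w * Real.sinh (ℓ / 2) < Real.cosh (ℓ / 2) := by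
    have hsq : (Real.cosh w * Real.sinh (ℓ / 2)) ^ 2 < Real.cosh (ℓ / 2) ^ 2 := by
      rw [mul_pow, hwsq, hw, hCsq, div_pow]
      have e : ((Real.cos φ ^ 2 / Real.sinh (ℓ / 2) ^ 2) + 1) * Real.sinh (ℓ / 2) ^ 2
          = Real.cos φ ^ 2 + Real.sinh (ℓ / 2) ^ 2 := by
        field_simp
      rw [e]
      linarith
    exact lt_of_pow_lt_pow_left₀ 2 hCpos.le hsq
  have hcw : Real.cosh w < Real.cosh (ℓ / 2) / Real.sinh (ℓ / 2) :=
    (lt_div_iff₀ hSpos).2 h4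
  -- coth identity
  have h1 : Real.cosh (ℓ / 4) / Real.sinh (ℓ / 4)
      = 1 / Real.sinh (ℓ / 2) + Real.cosh (ℓ / 2) / Real.sinh (ℓ / 2) := by
    rw [hS, hC]; field_simp; ring
  have key : Real.sinh (w + v) < Real.sinh c := by
    rw [Real.sinh_add, hw, hv, hsv, hc, h1]
    have h2 : Real.cosh w * (Real.cos φ / Real.sin φ)
        < Real.cosh (ℓ / 2) / Real.sinh (ℓ / 2) * (Real.cos φ / Real.sin φ) :=
      mul_lt_mul_of_pos_right hcw (div_pos hco hs)
    have h3 : Real.cos φ / Real.sinh (ℓ / 2) * (1 / Real.sin φ)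
        = 1 / Real.sinh (ℓ / 2) * (Real.cos φ / Real.sin φ) := by ring
    rw [h3, add_mul]
    linarith
  exact Real.sinh_lt_sinh.1 key
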